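/- For every simple graph G on n vertices, the sum of the largest adjacency eigenvalue of G and the largest adjacency eigenvalue of its complement is strictly less than √2 · n. -/

import Mathlib

open Matrix SimpleGraph Finset

lemma trace_mul_self_eq {n : ℕ} (A : Matrix (Fin n) (Fin n) ℝ) (hA : A.IsHermitian) :
    (A * A).trace = ∑ i, hA.eigenvalues i ^ 2 := by
  set U := (hA.eigenvectorUnitary : Matrix (Fin n) (Fin n) ℝ) with hUdef
  set D := Matrix.diagonal ((RCLike.ofReal : ℝ → ℝ) ∘ hA.eigenvalues) with hDdef
  have hU : star U * U = 1 := mem_unitaryGroup_iff'.mp hA.eigenvectorUnitary.2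
  have h1 : A * A = U * (D * D) * star U := by
    conv_lhs => rw [hA.spectral_theorem, Unitary.conjStarAlgAut_apply]
    rw [mul_assoc (U * D) (star U) (U * D * star U), ← mul_assoc (star U) (U * D) (star U),
      ← mul_assoc (star U) U D, hU, one_mul]
    noncomm_ring
  rw [h1, Matrix.trace_mul_cycle, hU, one_mul, hDdef, diagonal_mul_diagonal,
    Matrix.trace_diagonal]
  simp [sq]

lemma eig_sq_le_trace {n : ℕ} (G : SimpleGraph (Fin n)) [DecidableRel G.Adj]
    (hA : (G.adjMatrix ℝ).IsHermitian) (k : Fin n) :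
    hA.eigenvalues k ^ 2 ≤ ∑ v, (G.degree v : ℝ) := by
  have h : (G.adjMatrix ℝ * G.adjMatrix ℝ).trace = ∑ v, (G.degree v : ℝ) := by
    rw [Matrix.trace]
    congr 1; ext i
    rw [Matrix.diag_apply, adjMatrix_mul_self_apply_self]
  rw [← h, trace_mul_self_eq _ hA]
  exact Finset.single_le_sum (f := fun i => hA.eigenvalues i ^ 2)
    (fun i _ => sq_nonneg _) (Finset.mem_univ k)

/-- The eigenvalues of the adjacency matrix of `G`, in descending order:
`graphEig G i` is the `(i+1)`-th largest eigenvalue. -/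
noncomputable def graphEig {n : ℕ} (G : SimpleGraph (Fin n)) (i : Fin n) : ℝ :=
  letI := Classical.decRel G.Adj
  letI hH : (G.adjMatrix ℝ).IsHermitian := by rw [Matrix.IsHermitian, conjTranspose_eq_transpose_of_trivial]; exact G.isSymm_adjMatrix
  hH.eigenvalues (Tuple.sort hH.eigenvalues i.rev)

theorem stmt1 (n : ℕ) (hn : 1 ≤ n) (G : SimpleGraph (Fin n)) :
    graphEig G ⟨0, hn⟩ + graphEig Gᶜ ⟨0, hn⟩ < Real.sqrt 2 * n := by
  letI : DecidableRel G.Adj := Classical.decRel G.Adj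
  letI : DecidableRel Gᶜ.Adj := Classical.decRel Gᶜ.Adj
  have hA : (G.adjMatrix ℝ).IsHermitian := by
    rw [Matrix.IsHermitian, conjTranspose_eq_transpose_of_trivial]; exact G.isSymm_adjMatrix
  have hB : (Gᶜ.adjMatrix ℝ).IsHermitian := by
    rw [Matrix.IsHermitian, conjTranspose_eq_transpose_of_trivial]; exact Gᶜ.isSymm_adjMatrix
  obtain ⟨k, hk⟩ : ∃ k, graphEig G ⟨0, hn⟩ = hA.eigenvalues k := ⟨_, rfl⟩
  obtain ⟨l, hl⟩ : ∃ l, graphEig Gᶜ ⟨0, hn⟩ = hB.eigenvalues l := ⟨_, rfl⟩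
  set a := graphEig G ⟨0, hn⟩
  set b := graphEig Gᶜ ⟨0, hn⟩
  have ha2 : a ^ 2 ≤ ∑ v, (G.degree v : ℝ) := hk ▸ eig_sq_le_trace G hA k
  have hb2 : b ^ 2 ≤ ∑ v, (Gᶜ.degree v : ℝ) := hl ▸ eig_sq_le_trace Gᶜ hB l
  have hdeg : ∀ v, (G.degree v : ℝ) + (Gᶜ.degree v : ℝ) = (n : ℝ) - 1 := by
    intro v
    have h1 : Gᶜ.degree v = Fintype.card (Fin n) - 1 - G.degree v := G.degree_compl v
    have h2 : G.degree v < Fintype.card (Fin n) := G.degree_lt_card_verts v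
    have h3 : G.degree v + Gᶜ.degree v = n - 1 := by
      rw [h1, Fintype.card_fin] at *; omega
    have h4 := congrArg (fun m : ℕ => (m : ℝ)) h3
    push_cast at h4
    rw [Nat.cast_sub hn] at h4
    push_cast at h4
    linarith
  have hsum : (∑ v, (G.degree v : ℝ)) + (∑ v, (Gᶜ.degree v : ℝ)) = n * ((n : ℝ) - 1) := by
    rw [← Finset.sum_add_distrib]
    simp [hdeg, Finset.sum_const, mul_comm]; ring
  have hab : a ^ 2 + b ^ 2 ≤ (n : ℝ) * ((n : ℝ) - 1) := by linarith
  have hn' : (1 : ℝ) ≤ n := by exact_mod_cast hn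
  have hsq : (a + b) ^ 2 < (Real.sqrt 2 * n) ^ 2 := by
    have h2 : (Real.sqrt 2) ^ 2 = 2 := Real.sq_sqrt (by norm_num)
    have : (Real.sqrt 2 * n) ^ 2 = 2 * (n : ℝ) ^ 2 := by rw [mul_pow, h2]
    rw [this]
    nlinarith [sq_nonneg (a - b)]
  have hpos : (0 : ℝ) ≤ Real.sqrt 2 * n := by positivity
  calc a + b ≤ |a + b| := le_abs_self _
    _ < Real.sqrt 2 * n := by
        rw [← Real.sqrt_sq hpos, ← Real.sqrt_sq (abs_nonneg (a + b))]
        exact Real.sqrt_lt_sqrt (sq_nonneg _) (by rwa [sq_abs])
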